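/- Let C be a ℤ_p-chain complex each of whose chain groups is a finitely generated free ℤ[ℤ/pℤ]-module (generator of ℤ/pℤ acting as t). Let h ∈ H^i_s(C) be a torsion s-cohomology class and suppose h = [dφ]_s for a cochain φ ∈ C^i. Then h ≠ 0 if and only if there exist an integer n ≥ 2 and a chain c ∈ C_i such that d∂c ∈ n·C_{i−1} and φ(dc) is not divisible by n. -/

import Mathlib

/-- A `ℤ_p`-chain complex (in nonnegative degrees) whose degree-`n` chain group is the
finitely generated free ℤ-module with basis `{t^k σ : σ ∈ F n, 0 ≤ k ≤ p−1}`, i.e. the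
free ℤ-module on `F n × ZMod p`; the action of `t` cyclically permutes the basis, and
commutes with the boundary. Equivalently, each chain group is a finitely generated free
`ℤ[ℤ/pℤ]`-module with the generator of `ℤ/pℤ` acting as `t`. -/
structure ZpFreeComplex (p : ℕ) where
  F : ℕ → Type
  fin : ∀ n, Fintype (F n)
  bd : ∀ n, ((F (n + 1) × ZMod p → ℤ) →+ (F n × ZMod p → ℤ))
  bd_bd : ∀ n x, bd n (bd (n + 1) x) = 0
  bd_t : ∀ n (c : F (n + 1) × ZMod p → ℤ),
    bd n (fun z => c (z.1, z.2 - 1)) = fun z => bd n c (z.1, z.2 - 1)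

namespace ZpFreeComplex

variable {p : ℕ} (X : ZpFreeComplex p)

/-- degree-`n` chains -/
abbrev Ch (n : ℕ) := X.F n × ZMod p → ℤ

/-- degree-`n` integral cochains -/
abbrev Co (n : ℕ) := (X.F n × ZMod p → ℤ) →+ ℤ

/-- the chain map `t^k` -/
def tCh (n k : ℕ) : X.Ch n →+ X.Ch n where
  toFun c := fun z => c (z.1, z.2 - (k : ZMod p))
  map_zero' := rfl
  map_add' _ _ := rfl

/-- `s = 1 + t + ⋯ + t^{p−1}` on chains -/
def sCh (n : ℕ) : X.Ch n →+ X.Ch n := ∑ k ∈ Finset.range p, X.tCh n k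

/-- `d = 1 − t` on chains -/
def dCh (n : ℕ) : X.Ch n →+ X.Ch n := AddMonoidHom.id _ - X.tCh n 1

/-- the cochain map `t^k`, `φ ↦ φ ∘ t^k` -/
def tCo (n k : ℕ) : X.Co n →+ X.Co n where
  toFun φ := φ.comp (X.tCh n k)
  map_zero' := by ext x; simp
  map_add' _ _ := by ext x; simp

/-- `s = 1 + t + ⋯ + t^{p−1}` on cochains -/
def sCo (n : ℕ) : X.Co n →+ X.Co n where
  toFun φ := φ.comp (X.sCh n)
  map_zero' := by ext x; simp
  map_add' _ _ := by ext x; simp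

/-- `d = 1 − t` on cochains -/
def dCo (n : ℕ) : X.Co n →+ X.Co n where
  toFun φ := φ.comp (X.dCh n)
  map_zero' := by ext x; simp
  map_add' _ _ := by ext x; simp

/-- the coboundary `δφ = φ ∘ ∂` -/
def cb (n : ℕ) : X.Co n →+ X.Co (n + 1) where
  toFun φ := φ.comp (X.bd n)
  map_zero' := by ext x; simp
  map_add' _ _ := by ext x; simp

/-- the boundary out of degree `n` (the zero map in degree 0). -/
def bdFrom : ∀ n : ℕ, (X.Ch n →+ X.Ch (n - 1))
  | 0 => 0
  | (j + 1) => X.bd j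

lemma tCh_one (n : ℕ) (c : X.Ch n) : X.tCh n 1 c = fun z => c (z.1, z.2 - 1) := by
  funext z
  simp [tCh]

lemma tCh_succ (n k : ℕ) (c : X.Ch n) :
    X.tCh n (k + 1) c = X.tCh n 1 (X.tCh n k c) := by
  funext z
  show c (z.1, z.2 - ((k + 1 : ℕ) : ZMod p)) = c (z.1, z.2 - ((1 : ℕ) : ZMod p) - ((k : ℕ) : ZMod p))
  have h2 : z.2 - ((k + 1 : ℕ) : ZMod p) = z.2 - ((1 : ℕ) : ZMod p) - ((k : ℕ) : ZMod p) := by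
    push_cast
    ring
  rw [h2]

lemma tCh_zero (n : ℕ) (c : X.Ch n) : X.tCh n 0 c = c := by
  funext z
  simp [tCh]

lemma bd_tCh (n k : ℕ) (c : X.Ch (n + 1)) :
    X.bd n (X.tCh (n + 1) k c) = X.tCh n k (X.bd n c) := by
  induction k with
  | zero => rw [tCh_zero, tCh_zero]
  | succ k ih =>
      rw [X.tCh_succ (n + 1) k c, X.tCh_succ n k (X.bd n c)]
      rw [X.tCh_one (n + 1) (X.tCh (n + 1) k c)]
      rw [X.bd_t n (X.tCh (n + 1) k c)]
      rw [ih]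
      rw [← X.tCh_one n (X.tCh n k (X.bd n c))]

lemma bd_sCh (n : ℕ) (c : X.Ch (n + 1)) :
    X.bd n (X.sCh (n + 1) c) = X.sCh n (X.bd n c) := by
  simp only [sCh, AddMonoidHom.finset_sum_apply, map_sum, bd_tCh]

lemma bd_dCh (n : ℕ) (c : X.Ch (n + 1)) :
    X.bd n (X.dCh (n + 1) c) = X.dCh n (X.bd n c) := by
  simp only [dCh, AddMonoidHom.sub_apply, AddMonoidHom.id_apply, map_sub, bd_tCh]

end ZpFreeComplex

namespace ZpFreeComplex

variable {p : ℕ} (X : ZpFreeComplex p)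

/-- cocycles of the `d`-cochain complex `C*_d = ker d ⊆ C*` -/
def dcocycles (n : ℕ) : AddSubgroup (X.Co n) := (X.dCo n).ker ⊓ (X.cb n).ker

/-- coboundaries of the `d`-cochain complex -/
def dcobds : ∀ n : ℕ, AddSubgroup (X.Co n)
  | 0 => ⊥
  | (j + 1) => AddSubgroup.map (X.cb j) ((X.dCo j).ker)

/-- the `d`-cohomology `H^n_d` -/
abbrev Hd (n : ℕ) := X.dcocycles n ⧸ (X.dcobds n).addSubgroupOf (X.dcocycles n)

/-- the `d`-cohomology class `[φ]_d` of a cocycle of `C*_d` -/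
def clsd (n : ℕ) (φ : X.Co n) (h : φ ∈ X.dcocycles n) : X.Hd n :=
  QuotientAddGroup.mk ⟨φ, h⟩

/-- cocycles of the `s`-cochain complex `C*_s = ker s ⊆ C*` -/
def scocycles (n : ℕ) : AddSubgroup (X.Co n) := (X.sCo n).ker ⊓ (X.cb n).ker

/-- coboundaries of the `s`-cochain complex -/
def scobds : ∀ n : ℕ, AddSubgroup (X.Co n)
  | 0 => ⊥
  | (j + 1) => AddSubgroup.map (X.cb j) ((X.sCo j).ker)

/-- the `s`-cohomology `H^n_s` -/
abbrev Hs (n : ℕ) := X.scocycles n ⧸ (X.scobds n).addSubgroupOf (X.scocycles n)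

/-- the `s`-cohomology class `[φ]_s` of a cocycle of `C*_s` -/
def clss (n : ℕ) (φ : X.Co n) (h : φ ∈ X.scocycles n) : X.Hs n :=
  QuotientAddGroup.mk ⟨φ, h⟩

/-- the boundary of the `d`-chain complex `C^d = ker d ⊆ C`, i.e. the restriction
of the boundary of `C`. -/
def bdD (n : ℕ) : ↥((X.dCh (n + 1)).ker) →+ ↥((X.dCh n).ker) :=
  AddMonoidHom.codRestrict ((X.bd n).comp (X.dCh (n + 1)).ker.subtype) ((X.dCh n).ker)
    (fun x => by
      have hx : X.dCh (n + 1) (x : X.Ch (n + 1)) = 0 := x.2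
      simp only [AddMonoidHom.mem_ker, AddMonoidHom.coe_comp, AddSubgroup.coe_subtype,
        Function.comp_apply]
      rw [← bd_dCh, hx, map_zero])

/-- the boundary of the `s`-chain complex `C^s = ker s ⊆ C`, i.e. the restriction
of the boundary of `C`. -/
def bdS (n : ℕ) : ↥((X.sCh (n + 1)).ker) →+ ↥((X.sCh n).ker) :=
  AddMonoidHom.codRestrict ((X.bd n).comp (X.sCh (n + 1)).ker.subtype) ((X.sCh n).ker)
    (fun x => by
      have hx : X.sCh (n + 1) (x : X.Ch (n + 1)) = 0 := x.2
      simp only [AddMonoidHom.mem_ker, AddMonoidHom.coe_comp, AddSubgroup.coe_subtype,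
        Function.comp_apply]
      rw [← bd_sCh, hx, map_zero])

lemma cb_dCo (n : ℕ) (φ : X.Co n) :
    X.cb n (X.dCo n φ) = X.dCo (n + 1) (X.cb n φ) := by
  ext x
  show (X.dCo n φ) (X.bd n x) = (X.cb n φ) (X.dCh (n + 1) x)
  show φ (X.dCh n (X.bd n x)) = φ (X.bd n (X.dCh (n + 1) x))
  rw [bd_dCh]

lemma cb_sCo (n : ℕ) (φ : X.Co n) :
    X.cb n (X.sCo n φ) = X.sCo (n + 1) (X.cb n φ) := by
  ext x
  show φ (X.sCh n (X.bd n x)) = φ (X.bd n (X.sCh (n + 1) x))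
  rw [bd_sCh]

/-- the coboundary of `C*_d`, i.e. the restriction of the coboundary of `C*`. -/
def cbD (n : ℕ) : ↥((X.dCo n).ker) →+ ↥((X.dCo (n + 1)).ker) :=
  AddMonoidHom.codRestrict ((X.cb n).comp (X.dCo n).ker.subtype) ((X.dCo (n + 1)).ker)
    (fun φ => by
      have hφ : X.dCo n (φ : X.Co n) = 0 := φ.2
      simp only [AddMonoidHom.mem_ker, AddMonoidHom.coe_comp, AddSubgroup.coe_subtype,
        Function.comp_apply]
      rw [← cb_dCo, hφ, map_zero])

end ZpFreeComplex

open ZpFreeComplex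


section Auxiliary

lemma int_eq_zero_of_forall_dvd (v : ℤ) (hv : ∀ n : ℕ, 2 ≤ n → (n : ℤ) ∣ v) : v = 0 := by
  by_contra hne
  have h2 := hv (v.natAbs + 2) (by omega)
  have h3 : (v.natAbs + 2 : ℕ) ∣ v.natAbs := by
    have := Int.natAbs_dvd_natAbs.mpr h2
    rwa [Int.natAbs_natCast] at this
  have h4 : 0 < v.natAbs := Int.natAbs_pos.mpr hne
  have := Nat.le_of_dvd h4 h3
  omega

namespace ZpFreeComplex

variable {p : ℕ} (X : ZpFreeComplex p)

lemma dCh_apply (n : ℕ) (x : X.Ch n) (z : X.F n × ZMod p) :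
    X.dCh n x z = x z - x (z.1, z.2 - 1) := by
  simp [dCh, tCh]

lemma sCh_apply (n : ℕ) (x : X.Ch n) (z : X.F n × ZMod p) :
    X.sCh n x z = ∑ a ∈ Finset.range p, x (z.1, z.2 - (a : ZMod p)) := by
  simp [sCh, tCh, AddMonoidHom.finset_sum_apply]

lemma dCh_sCh (n : ℕ) (y : X.Ch n) : X.dCh n (X.sCh n y) = 0 := by
  funext z
  rw [dCh_apply, sCh_apply]
  have h2 : X.sCh n y (z.1, z.2 - 1)
      = ∑ a ∈ Finset.range p, y (z.1, z.2 - ((a + 1 : ℕ) : ZMod p)) := by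
    rw [sCh_apply]
    apply Finset.sum_congr rfl
    intro a _
    show y ((z.1, z.2 - 1).1, (z.1, z.2 - 1).2 - (a : ZMod p)) = _
    congr 1
    show (z.1, z.2 - 1 - (a : ZMod p)) = (z.1, z.2 - ((a + 1 : ℕ) : ZMod p))
    congr 1
    push_cast
    ring
  rw [h2]
  have h4 := Finset.sum_range_succ' (fun a => y (z.1, z.2 - (a : ZMod p))) p
  have h5 := Finset.sum_range_succ (fun a => y (z.1, z.2 - (a : ZMod p))) p
  have h6 : y (z.1, z.2 - ((p : ℕ) : ZMod p)) = y (z.1, z.2 - ((0 : ℕ) : ZMod p)) := by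
    norm_num
  show _ = (0 : ℤ)
  linarith [h4, h5, h6]

/-- the subgroup of chains `x` such that some positive multiple of `x` is a boundary
plus an element of the image of `s`. -/
def Hsub (j : ℕ) : Submodule ℤ (X.Ch j) where
  carrier := {x | ∃ m : ℤ, 1 ≤ m ∧ ∃ c y, m • x = X.bd j c + X.sCh j y}
  zero_mem' := ⟨1, le_refl 1, 0, 0, by simp⟩
  add_mem' := by
    rintro x x' ⟨m, hm, c, y, he⟩ ⟨m', hm', c', y', he'⟩
    refine ⟨m * m', by nlinarith, m' • c + m • c', m' • y + m • y', ?_⟩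
    have a1 : (m * m') • x = m' • X.bd j c + m' • X.sCh j y := by
      rw [mul_comm, mul_smul, he, smul_add]
    have a2 : (m * m') • x' = m • X.bd j c' + m • X.sCh j y' := by
      rw [mul_smul, he', smul_add]
    simp only [map_add, map_zsmul, smul_add]
    rw [a1, a2]
    abel
  smul_mem' := by
    rintro a x ⟨m, hm, c, y, he⟩
    refine ⟨m, hm, a • c, a • y, ?_⟩
    rw [smul_comm m a x, he, smul_add, map_zsmul, map_zsmul]

lemma mem_Hsub {j : ℕ} {x : X.Ch j} :
    x ∈ X.Hsub j ↔ ∃ m : ℤ, 1 ≤ m ∧ ∃ c y, m • x = X.bd j c + X.sCh j y := Iff.rfl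

lemma bd_mem_Hsub (j : ℕ) (c : X.Ch (j + 1)) : X.bd j c ∈ X.Hsub j :=
  ⟨1, le_refl 1, c, 0, by simp⟩

lemma s_mem_Hsub (j : ℕ) (y : X.Ch j) : X.sCh j y ∈ X.Hsub j :=
  ⟨1, le_refl 1, 0, y, by simp⟩

/-- The key construction: if the divisibility certificate fails for every `n ≥ 2`, then
`dφ` is an `s`-coboundary. -/
lemma exists_s_coboundary (hp : p.Prime) (j : ℕ) (φ : X.Co (j + 1))
    (hdiv : ∀ n : ℕ, 2 ≤ n → ∀ c : X.Ch (j + 1),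
      (∃ w, X.dCh j (X.bd j c) = (n : ℤ) • w) → (n : ℤ) ∣ φ (X.dCh (j + 1) c)) :
    ∃ ψ : X.Co j, X.sCo j ψ = 0 ∧ X.cb j ψ = X.dCo (j + 1) φ := by
  classical
  haveI : Fact p.Prime := ⟨hp⟩
  haveI := X.fin j
  set H := X.Hsub j with hH
  -- boundaries lying in the image of s are killed by φ ∘ d
  have hA : ∀ (c : X.Ch (j + 1)) (y : X.Ch j), X.bd j c = X.sCh j y →
      φ (X.dCh (j + 1) c) = 0 := by
    intro c y hcy
    apply int_eq_zero_of_forall_dvd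
    intro n hn
    refine hdiv n hn c ⟨0, ?_⟩
    rw [hcy, dCh_sCh]
    simp
  have hB : ∀ (m : ℤ) (x : X.Ch j) (c : X.Ch (j + 1)) (y : X.Ch j), 1 ≤ m →
      m • x = X.bd j c + X.sCh j y → m ∣ φ (X.dCh (j + 1) c) := by
    intro m x c y hm he
    have hd : X.dCh j (X.bd j c) = m • X.dCh j x := by
      have h1 := congrArg (X.dCh j) he
      rw [map_zsmul, map_add, dCh_sCh, add_zero] at h1
      exact h1.symm
    rcases eq_or_lt_of_le hm with h1 | h1
    · rw [← h1]; exact one_dvd _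
    · have h2 : 2 ≤ m.toNat := by omega
      have h3 : ((m.toNat : ℕ) : ℤ) = m := Int.toNat_of_nonneg (by omega)
      rw [← h3]
      exact hdiv m.toNat h2 c ⟨X.dCh j x, by rw [h3]; exact hd⟩
  have hC : ∀ (m m' : ℤ) (x : X.Ch j) (c c' : X.Ch (j + 1)) (y y' : X.Ch j),
      1 ≤ m → 1 ≤ m' → m • x = X.bd j c + X.sCh j y → m' • x = X.bd j c' + X.sCh j y' →
      m' * φ (X.dCh (j + 1) c) = m * φ (X.dCh (j + 1) c') := by
    intro m m' x c c' y y' hm hm' he he'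
    have e1 : (m' * m) • x = m' • X.bd j c + m' • X.sCh j y := by
      rw [mul_smul, he, smul_add]
    have e2 : (m' * m) • x = m • X.bd j c' + m • X.sCh j y' := by
      rw [mul_comm, mul_smul, he', smul_add]
    have e3 : m' • X.bd j c - m • X.bd j c' = m • X.sCh j y' - m' • X.sCh j y := by
      rw [sub_eq_sub_iff_add_eq_add, ← e1, e2]
      abel
    have e4 : X.bd j (m' • c - m • c') = X.sCh j (m • y' - m' • y) := by
      simp only [map_sub, map_zsmul]
      exact e3
    have e5 := hA (m' • c - m • c') (m • y' - m' • y) e4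
    simp only [map_sub, map_zsmul, smul_eq_mul] at e5
    linarith
  -- the well-defined quotient value
  have hex : ∀ x : H, ∃ z : ℤ, ∀ (m : ℤ) (c : X.Ch (j + 1)) (y : X.Ch j), 1 ≤ m →
      m • (x : X.Ch j) = X.bd j c + X.sCh j y → φ (X.dCh (j + 1) c) = m * z := by
    rintro ⟨x, m, hm, c, y, he⟩
    obtain ⟨z, hz⟩ := hB m x c y hm he
    refine ⟨z, ?_⟩
    intro m' c' y' hm' he'
    have h1 := hC m m' x c c' y y' hm hm' he he'
    have hm0 : m ≠ 0 := by omega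
    have h2 : m * φ (X.dCh (j + 1) c') = m * (m' * z) := by
      rw [← h1, hz]; ring
    have := mul_left_cancel₀ hm0 h2
    linarith
  choose f hf using hex
  have f_add : ∀ a b : H, f (a + b) = f a + f b := by
    rintro ⟨x, hx⟩ ⟨x', hx'⟩
    obtain ⟨m, hm, c, y, he⟩ := hx
    obtain ⟨m', hm', c', y', he'⟩ := hx'
    have e2 : (m * m') • (x + x') = X.bd j (m' • c + m • c') + X.sCh j (m' • y + m • y') := by
      have a1 : (m * m') • x = m' • X.bd j c + m' • X.sCh j y := by
        rw [mul_comm, mul_smul, he, smul_add]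
      have a2 : (m * m') • x' = m • X.bd j c' + m • X.sCh j y' := by
        rw [mul_smul, he', smul_add]
      simp only [map_add, map_zsmul, smul_add]
      rw [a1, a2]
      abel
    have hx : x ∈ H := ⟨m, hm, c, y, he⟩
    have hx' : x' ∈ H := ⟨m', hm', c', y', he'⟩
    have h1 := hf ⟨x, hx⟩ m c y hm he
    have h2 := hf ⟨x', hx'⟩ m' c' y' hm' he'
    have h3 := hf (⟨x, hx⟩ + ⟨x', hx'⟩) (m * m') (m' • c + m • c') (m' • y + m • y')
      (by nlinarith) e2
    have h4 : φ (X.dCh (j + 1) (m' • c + m • c'))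
        = m' * φ (X.dCh (j + 1) c) + m * φ (X.dCh (j + 1) c') := by
      simp only [map_add, map_zsmul, smul_eq_mul]
    rw [h4, h1, h2] at h3
    have hmm0 : (m * m' : ℤ) ≠ 0 := by positivity
    apply mul_left_cancel₀ hmm0
    rw [← h3]; ring
  have f_bd : ∀ c : X.Ch (j + 1), f ⟨X.bd j c, X.bd_mem_Hsub j c⟩ = φ (X.dCh (j + 1) c) := by
    intro c
    have := hf ⟨X.bd j c, X.bd_mem_Hsub j c⟩ 1 c 0 (le_refl 1) (by simp)
    simpa using this.symm
  have f_s : ∀ y : X.Ch j, f ⟨X.sCh j y, X.s_mem_Hsub j y⟩ = 0 := by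
    intro y
    have := hf ⟨X.sCh j y, X.s_mem_Hsub j y⟩ 1 0 y (le_refl 1) (by simp)
    simpa using this.symm
  -- the quotient is finite free, so the projection splits
  haveI : Module.Finite ℤ (X.Ch j ⧸ H) :=
    Module.Finite.of_surjective H.mkQ (Submodule.Quotient.mk_surjective H)
  haveI : NoZeroSMulDivisors ℤ (X.Ch j ⧸ H) := by
    refine ⟨fun {a q} haq => ?_⟩
    by_cases ha : a = 0
    · exact Or.inl ha
    refine Or.inr ?_
    obtain ⟨x, rfl⟩ := Submodule.Quotient.mk_surjective H q
    rw [Submodule.Quotient.mk_eq_zero]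
    have hax : a • x ∈ H := by
      rw [← Submodule.Quotient.mk_eq_zero, Submodule.Quotient.mk_smul]
      exact haq
    obtain ⟨m, hm, c, y, e⟩ := hax
    rw [← mul_smul] at e
    rcases lt_or_gt_of_ne ha with hneg | hpos
    · refine ⟨-(m * a), by nlinarith, -c, -y, ?_⟩
      rw [neg_smul, e, map_neg, map_neg]
      abel
    · exact ⟨m * a, by nlinarith, c, y, e⟩
  haveI : Module.Free ℤ (X.Ch j ⧸ H) := Module.free_of_finite_type_torsion_free'
  obtain ⟨σ, hσ⟩ := Module.projective_lifting_property H.mkQ LinearMap.id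
    (Submodule.Quotient.mk_surjective H)
  have hr : ∀ x : X.Ch j, x - σ (H.mkQ x) ∈ H := by
    intro x
    have h1 : H.mkQ (x - σ (H.mkQ x)) = 0 := by
      rw [map_sub]
      have h2 := LinearMap.congr_fun hσ (H.mkQ x)
      simp only [LinearMap.coe_comp, Function.comp_apply, LinearMap.id_apply] at h2
      rw [h2, sub_self]
    rwa [← LinearMap.mem_ker, Submodule.ker_mkQ] at h1
  set r : X.Ch j → H := fun x => ⟨x - σ (H.mkQ x), hr x⟩ with hrdef
  have r_add : ∀ x y : X.Ch j, r (x + y) = r x + r y := by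
    intro x y
    apply Subtype.ext
    show (x + y) - σ (H.mkQ (x + y)) = (x - σ (H.mkQ x)) + (y - σ (H.mkQ y))
    rw [map_add, map_add]
    abel
  have r_mem : ∀ (x : X.Ch j) (hx : x ∈ H), r x = ⟨x, hx⟩ := by
    intro x hx
    apply Subtype.ext
    show x - σ (H.mkQ x) = x
    have h1 : H.mkQ x = 0 := by
      rw [Submodule.mkQ_apply, Submodule.Quotient.mk_eq_zero]
      exact hx
    rw [h1, map_zero, sub_zero]
  refine ⟨AddMonoidHom.mk' (fun x => f (r x)) (fun x y => by show f (r (x + y)) = f (r x) + f (r y); rw [r_add, f_add]), ?_, ?_⟩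
  · apply AddMonoidHom.ext
    intro x
    show f (r (X.sCh j x)) = 0
    rw [r_mem (X.sCh j x) (X.s_mem_Hsub j x), f_s]
  · apply AddMonoidHom.ext
    intro c
    show f (r (X.bd j c)) = φ (X.dCh (j + 1) c)
    rw [r_mem (X.bd j c) (X.bd_mem_Hsub j c), f_bd]

/-- If `sψ = 0` and `dx` is divisible by `n`, then `ψ(x)` is divisible by `n`. -/
lemma dvd_of_s_eq_zero (hp : p.Prime) (j : ℕ) (ψ : X.Co j) (hs : X.sCo j ψ = 0)
    (x : X.Ch j) (n : ℕ) (w : X.Ch j) (hw : X.dCh j x = (n : ℤ) • w) :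
    (n : ℤ) ∣ ψ x := by
  classical
  haveI : Fact p.Prime := ⟨hp⟩
  set b : X.Ch j := fun z => if z.2 = 0 then x (z.1, 0) else 0 with hbdef
  have hb : ∀ z : X.F j × ZMod p, X.sCh j b z = x (z.1, 0) := by
    intro z
    rw [sCh_apply]
    have hval : z.2.val ∈ Finset.range p := Finset.mem_range.mpr (ZMod.val_lt z.2)
    rw [Finset.sum_eq_single z.2.val]
    · show (if z.2 - (z.2.val : ZMod p) = 0 then x (z.1, 0) else 0) = x (z.1, 0)
      rw [if_pos]
      rw [ZMod.natCast_val, ZMod.cast_id, sub_self]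
    · intro a ha hne
      show (if z.2 - (a : ZMod p) = 0 then x (z.1, 0) else 0) = 0
      rw [if_neg]
      intro hcon
      have h1 : (a : ZMod p) = z.2 := by
        have := sub_eq_zero.mp hcon
        exact this.symm
      have h2 : a = z.2.val := by
        rw [← h1, ZMod.val_cast_of_lt (Finset.mem_range.mp ha)]
      exact hne h2
    · intro hcon
      exact absurd hval hcon
  have hdvd : ∀ z : X.F j × ZMod p, (n : ℤ) ∣ (x z - x (z.1, 0)) := by
    intro z
    have key : ∀ m : ℕ, (n : ℤ) ∣ (x (z.1, (m : ZMod p)) - x (z.1, 0)) := by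
      intro m
      induction m with
      | zero => simp
      | succ m ih =>
        have e1 : x (z.1, ((m + 1 : ℕ) : ZMod p)) - x (z.1, (m : ZMod p))
            = X.dCh j x (z.1, ((m + 1 : ℕ) : ZMod p)) := by
          rw [dCh_apply]
          congr 2
          push_cast
          ring
        have e2 : (n : ℤ) ∣ X.dCh j x (z.1, ((m + 1 : ℕ) : ZMod p)) := by
          rw [hw]
          exact ⟨w (z.1, ((m + 1 : ℕ) : ZMod p)), by simp [mul_comm]⟩
        have e3 : x (z.1, ((m + 1 : ℕ) : ZMod p)) - x (z.1, 0)
            = (x (z.1, ((m + 1 : ℕ) : ZMod p)) - x (z.1, (m : ZMod p)))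
              + (x (z.1, (m : ZMod p)) - x (z.1, 0)) := by ring
        rw [e3, e1]
        exact dvd_add e2 ih
    have h1 := key z.2.val
    rw [ZMod.natCast_val, ZMod.cast_id] at h1
    simpa using h1
  set y : X.Ch j := fun z => (x z - x (z.1, 0)) / n with hydef
  have hx : x = (n : ℤ) • y + X.sCh j b := by
    funext z
    show x z = (n : ℤ) * ((x z - x (z.1, 0)) / n) + X.sCh j b z
    rw [hb z, Int.mul_ediv_cancel' (hdvd z)]
    ring
  have hψs : ψ (X.sCh j b) = 0 := by
    have := DFunLike.congr_fun hs b
    exact this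
  rw [hx, map_add, map_zsmul, hψs, add_zero, smul_eq_mul]
  exact ⟨ψ y, rfl⟩

lemma clss_eq_zero_iff (n : ℕ) (φ : X.Co n) (h : φ ∈ X.scocycles n) :
    X.clss n φ h = 0 ↔ φ ∈ X.scobds n := by
  have h1 : X.clss n φ h = 0 ↔ (⟨φ, h⟩ : X.scocycles n) ∈
      (X.scobds n).addSubgroupOf (X.scocycles n) :=
    QuotientAddGroup.eq_zero_iff _
  rw [h1, AddSubgroup.mem_addSubgroupOf]

end ZpFreeComplex

end Auxiliary

/-- **Certificate for a non-trivial `s`-cohomology class.**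
Let `K` be a `ℤ_p`-chain complex each of whose chain groups is a finitely generated free
`ℤ[ℤ/pℤ]`-module with the generator acting as `t` (modelled as `F n × ZMod p → ℤ` with
`t` cyclically shifting the second coordinate).  Let `h ∈ H^i_s(K)` be a torsion
`s`-cohomology class with `h = [dφ]_s` for a cochain `φ ∈ C^i`.  Then `h ≠ 0` if and
only if there exist an integer `n ≥ 2` and a chain `c ∈ C_i` such that
`d ∂c ∈ n·C_{i−1}` and `φ(dc)` is not divisible by `n`. -/
theorem certificate_for_nontrivial_s_class
    (p : ℕ) (hp : p.Prime) (X : ZpFreeComplex p)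
    (i : ℕ) (φ : X.Co i)
    (hmem : X.dCo i φ ∈ X.scocycles i)
    (h : X.Hs i) (hrep : X.clss i (X.dCo i φ) hmem = h)
    (htor : ∃ k : ℕ, 1 ≤ k ∧ k • h = 0) :
    h ≠ 0 ↔
      ∃ n : ℕ, 2 ≤ n ∧
        ∃ c : X.Ch i,
          (∃ w : X.Ch (i - 1), X.dCh (i - 1) (X.bdFrom i c) = (n : ℤ) • w) ∧
          ¬ ((n : ℤ) ∣ φ (X.dCh i c)) := by
  subst hrep
  constructor
  · -- h ≠ 0 → certificate; we prove the contrapositive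
    intro hne
    by_contra hnr
    push_neg at hnr
    -- hnr : ∀ n, 2 ≤ n → ∀ c, (∃ w, _) → (n:ℤ) ∣ φ (X.dCh i c)
    apply hne
    rw [X.clss_eq_zero_iff]
    cases i with
    | zero =>
      show X.dCo 0 φ ∈ (⊥ : AddSubgroup (X.Co 0))
      rw [AddSubgroup.mem_bot]
      apply AddMonoidHom.ext
      intro c
      show φ (X.dCh 0 c) = 0
      apply int_eq_zero_of_forall_dvd
      intro n hn
      exact hnr n hn c ⟨0, by show X.dCh 0 (X.bdFrom 0 c) = _; simp [bdFrom]⟩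
    | succ j =>
      obtain ⟨ψ, hψs, hψe⟩ := X.exists_s_coboundary hp j φ (fun n hn c hw => hnr n hn c hw)
      show X.dCo (j + 1) φ ∈ AddSubgroup.map (X.cb j) ((X.sCo j).ker)
      exact ⟨ψ, by simpa [AddMonoidHom.mem_ker] using hψs, hψe⟩
  · rintro ⟨n, hn, c, ⟨w, hw⟩, hnd⟩ h0
    rw [X.clss_eq_zero_iff] at h0
    cases i with
    | zero =>
      have h1 : X.dCo 0 φ = 0 := by
        have : X.dCo 0 φ ∈ (⊥ : AddSubgroup (X.Co 0)) := h0
        rwa [AddSubgroup.mem_bot] at this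
      apply hnd
      have h2 : φ (X.dCh 0 c) = 0 := by
        have := DFunLike.congr_fun h1 c
        exact this
      rw [h2]
      exact dvd_zero _
    | succ j =>
      obtain ⟨ψ, hψmem, hψeq⟩ := h0
      have hψs : X.sCo j ψ = 0 := hψmem
      apply hnd
      have h1 : φ (X.dCh (j + 1) c) = ψ (X.bd j c) := by
        have := DFunLike.congr_fun hψeq c
        exact this.symm
      rw [h1]
      exact X.dvd_of_s_eq_zero hp j ψ hψs (X.bd j c) n w hw
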